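/- Let α, β > 0 with α + β ≥ 1 and let f : [a,b] → ℝ be absolutely continuous with f(b) = 0. Then ∫ₐᵇ |f(x)|^β |f'(x)|^α dx ≤ (α/(α+β))^{α/(α+β)} · [(b−a)^{α+β}/(α+β)]^{β/(α+β)} · ∫ₐᵇ |f'(x)|^{α+β} dx. -/

import Mathlib

open MeasureTheory Set Real intervalIntegral

private lemma memLp_of_int {μ : MeasureTheory.Measure ℝ} {q : ℝ} (hq : 0 < q) {g : ℝ → ℝ}
    (hg : AEStronglyMeasurable g μ) (h : Integrable (fun x => |g x| ^ q) μ) :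
    MemLp g (ENNReal.ofReal q) μ := by
  have hne : ENNReal.ofReal q ≠ 0 := by simp [ENNReal.ofReal_eq_zero, not_le, hq]
  have htop : ENNReal.ofReal q ≠ ⊤ := ENNReal.ofReal_ne_top
  refine (memLp_norm_rpow_iff (p := ENNReal.ofReal q) hg hne htop).mp ?_
  rw [ENNReal.div_self hne htop, ENNReal.toReal_ofReal hq.le, memLp_one_iff_integrable]
  simpa [Real.norm_eq_abs] using h


private lemma opial_key {a b c : ℝ} (hab : a ≤ b) (hc : 0 < c) {h : ℝ → ℝ}
    (hmeas : Measurable h) (hnn : ∀ x, 0 ≤ h x)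
    (hint : IntegrableOn h (Set.Ioc a b)) :
    ∫ x in Set.Ioc a b, (∫ t in Set.Ioc x b, h t) ^ c * h x ≤
      (∫ t in Set.Ioc a b, h t) ^ (c + 1) / (c + 1) := by
  set G : ℝ → ℝ := fun x => ∫ t in Set.Ioc x b, h t with hGdef
  set I : ℝ := ∫ t in Set.Ioc a b, h t with hIdef
  have hc1 : (0:ℝ) < c + 1 := by linarith
  have hGnn : ∀ x, 0 ≤ G x := fun x =>
    setIntegral_nonneg measurableSet_Ioc fun t _ => hnn t
  have hIcc_int : IntegrableOn h (Icc a b) := by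
    rwa [integrableOn_Icc_iff_integrableOn_Ioc]
  have hGcont : ContinuousOn G (Icc a b) := by
    have h1 : ContinuousOn (fun x => ∫ t in x..b, h t) (uIcc a b) :=
      continuousOn_primitive_interval_left (by rwa [uIcc_of_le hab])
    rw [uIcc_of_le hab] at h1
    exact h1.congr fun x hx => (intervalIntegral.integral_of_le hx.2).symm
  have hsplit : ∀ x ∈ Icc a b, (∫ t in Set.Ioc a x, h t) + G x = I := by
    intro x hx
    rw [hIdef, hGdef, ← setIntegral_union (Set.Ioc_disjoint_Ioc_of_le le_rfl) measurableSet_Ioc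
      (hint.mono_set (Set.Ioc_subset_Ioc_right hx.2))
      (hint.mono_set (Set.Ioc_subset_Ioc_left hx.1)),
      Set.Ioc_union_Ioc_eq_Ioc hx.1 hx.2]
  have hGanti : ∀ x ∈ Icc a b, ∀ y ∈ Icc a b, x ≤ y → G y ≤ G x := by
    intro x hx y hy hxy
    have h1 := hsplit x hx
    have h2 := hsplit y hy
    have h3 : (∫ t in Set.Ioc a x, h t) ≤ ∫ t in Set.Ioc a y, h t :=
      setIntegral_mono_set (hint.mono_set (Set.Ioc_subset_Ioc_right hy.2))
        (ae_of_all _ fun t => hnn t)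
        (HasSubset.Subset.eventuallyLE (Set.Ioc_subset_Ioc_right hxy))
    linarith
  have hGb : G b = 0 := by simp [hGdef]
  have hGa : G a = I := rfl
  have hGleI : ∀ x ∈ Icc a b, G x ≤ I := fun x hx =>
    hGa ▸ hGanti a (left_mem_Icc.2 hab) x hx hx.1
  have hI0 : 0 ≤ I := hGnn a
  rcases eq_or_lt_of_le hI0 with hI | hIpos
  · -- I = 0 case
    have hz : h =ᵐ[volume.restrict (Set.Ioc a b)] 0 :=
      (setIntegral_eq_zero_iff_of_nonneg_ae (ae_of_all _ fun t => hnn t) hint).mp hI.symm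
    have hL : ∫ x in Set.Ioc a b, G x ^ c * h x = 0 := by
      rw [show (0:ℝ) = ∫ x in Set.Ioc a b, (0:ℝ) from (by simp)]
      apply MeasureTheory.integral_congr_ae
      filter_upwards [hz] with x hx
      simp [hx]
    rw [hL, ← hI, Real.zero_rpow hc1.ne', zero_div]
  · -- main case : 0 < I
    set μab := volume.restrict (Set.Ioc a b) with hμab
    set ν := μab.withDensity (fun x => ENNReal.ofReal (h x)) with hνdef
    have hν_ac : ν ≪ μab := withDensity_absolutelyContinuous _ _
    have hνcompl : ν ((Set.Ioc a b)ᶜ) = 0 := by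
      apply hν_ac
      rw [hμab, Measure.restrict_apply (MeasurableSet.compl measurableSet_Ioc)]
      simp
    have hGm : AEStronglyMeasurable G μab :=
      (hGcont.aestronglyMeasurable measurableSet_Icc).mono_measure
        (Measure.restrict_mono Set.Ioc_subset_Icc_self le_rfl)
    have hGcm : AEStronglyMeasurable (fun x => G x ^ c) μab :=
      (Real.continuous_rpow_const hc.le).comp_aestronglyMeasurable hGm
    -- step 1 : to lintegral over ν
    have e1 : ∫ x in Set.Ioc a b, G x ^ c * h x
        = (∫⁻ x, ENNReal.ofReal (G x ^ c) ∂ν).toReal := by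
      rw [integral_eq_lintegral_of_nonneg_ae
        (ae_of_all _ fun x => mul_nonneg (Real.rpow_nonneg (hGnn x) c) (hnn x))
        (hGcm.mul hmeas.aestronglyMeasurable)]
      congr 1
      rw [hνdef, lintegral_withDensity_eq_lintegral_mul₀ hmeas.aemeasurable.ennreal_ofReal
        (hGcm.aemeasurable.ennreal_ofReal)]
      apply lintegral_congr fun x => ?_
      simp only [Pi.mul_apply]
      rw [ENNReal.ofReal_mul (Real.rpow_nonneg (hGnn x) c), mul_comm]
    -- step 2 : layer cake
    have hGaem : AEMeasurable G ν := hGm.aemeasurable.mono_ac hν_ac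
    have lc := lintegral_comp_eq_lintegral_meas_lt_mul ν (f := G)
      (g := fun t => c * t ^ (c - 1)) (ae_of_all _ hGnn) hGaem
      (fun t _ => (intervalIntegral.intervalIntegrable_rpow' (by linarith)).const_mul c)
      ((ae_restrict_iff' measurableSet_Ioi).2 (ae_of_all _ fun t ht =>
          mul_nonneg hc.le (Real.rpow_nonneg (le_of_lt ht) _)))
    have eval : ∀ y : ℝ, 0 ≤ y → ∫ t in (0:ℝ)..y, c * t ^ (c - 1) = y ^ c := by
      intro y hy
      rw [intervalIntegral.integral_const_mul, integral_rpow (Or.inl (by linarith)),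
        show c - 1 + 1 = c from by ring, Real.zero_rpow hc.ne', sub_zero]
      field_simp
    have e2 : ∫⁻ x, ENNReal.ofReal (G x ^ c) ∂ν
        = ∫⁻ t in Set.Ioi (0:ℝ), ν {x | t < G x} * ENNReal.ofReal (c * t ^ (c - 1)) := by
      rw [← lc]
      exact lintegral_congr fun x => by rw [eval _ (hGnn x)]
    -- step 3 : bound the tail measures
    have hbound : ∀ t : ℝ, 0 < t → ν {x | t < G x} ≤ ENNReal.ofReal (I - t) := by
      intro t ht
      rcases lt_or_ge t I with htI | htI
      · obtain ⟨s, hs, hGs⟩ : ∃ s ∈ Icc a b, G s = t := by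
          have h1 := intermediate_value_Icc' hab hGcont
          have hmem : t ∈ Icc (G b) (G a) := ⟨by rw [hGb]; exact ht.le, by rw [hGa]; exact htI.le⟩
          exact h1 hmem
        have hsub2 : {x | t < G x} ⊆ Set.Ioc a s ∪ (Set.Ioc a b)ᶜ := by
          intro x hx
          by_cases hxm : x ∈ Set.Ioc a b
          · left
            refine ⟨hxm.1, ?_⟩
            by_contra hxs
            push_neg at hxs
            have h4 : G x ≤ G s :=
              hGanti s hs x ⟨hs.1.trans hxs.le, hxm.2⟩ hxs.le
            rw [hGs] at h4
            exact absurd hx (by simp [not_lt.2 h4])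
          · exact Or.inr hxm
        have hIocs : IntegrableOn h (Set.Ioc a s) :=
          hint.mono_set (Set.Ioc_subset_Ioc_right hs.2)
        have hνIocs : ν (Set.Ioc a s) = ENNReal.ofReal (I - t) := by
          rw [hνdef, withDensity_apply _ measurableSet_Ioc, hμab,
            Measure.restrict_restrict measurableSet_Ioc,
            Set.inter_eq_self_of_subset_left (Set.Ioc_subset_Ioc_right hs.2),
            ← ofReal_integral_eq_lintegral_ofReal hIocs (ae_of_all _ fun x => hnn x)]
          congr 1
          have := hsplit s hs
          rw [hGs] at this
          linarith
        calc ν {x | t < G x} ≤ ν (Set.Ioc a s ∪ (Set.Ioc a b)ᶜ) := measure_mono hsub2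
          _ ≤ ν (Set.Ioc a s) + ν ((Set.Ioc a b)ᶜ) := measure_union_le _ _
          _ = ENNReal.ofReal (I - t) := by rw [hνcompl, hνIocs, add_zero]
      · have hnull : ν {x | t < G x} = 0 := by
          apply measure_mono_null ?_ hνcompl
          intro x hx
          simp only [mem_setOf_eq] at hx
          simp only [Set.mem_compl_iff]
          intro hxm
          have : G x ≤ I := hGleI x (Set.Ioc_subset_Icc_self hxm)
          linarith
        simp [hnull]
    -- step 4 : compute the dominating integral
    have hψint : IntegrableOn (fun t => (I - t) * (c * t ^ (c - 1))) (Set.Ioc 0 I) := by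
      have h1 : IntervalIntegrable (fun t => (I - t) * (c * t ^ (c - 1))) volume 0 I :=
        ((intervalIntegral.intervalIntegrable_rpow' (by linarith)).const_mul c).continuousOn_mul
          (by fun_prop)
      rwa [intervalIntegrable_iff_integrableOn_Ioc_of_le hI0] at h1
    have hval : ∫ t in Set.Ioc 0 I, (I - t) * (c * t ^ (c - 1)) = I ^ (c + 1) / (c + 1) := by
      rw [← intervalIntegral.integral_of_le hI0]
      have hEq : ∀ t ∈ Set.uIcc (0:ℝ) I,
          (I - t) * (c * t ^ (c - 1)) = I * (c * t ^ (c - 1)) - c * (t ^ c) := by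
        intro t ht
        rw [uIcc_of_le hI0] at ht
        rcases eq_or_lt_of_le ht.1 with h0 | h0
        · rw [← h0, Real.zero_rpow hc.ne']
          ring
        · have htc : t ^ (c - 1) * t = t ^ c := by
            rw [show c = c - 1 + 1 from by ring, Real.rpow_add_one h0.ne' (c - 1)]
            ring_nf
          nlinarith [htc]
      rw [intervalIntegral.integral_congr hEq,
        intervalIntegral.integral_sub
          (((intervalIntegral.intervalIntegrable_rpow' (by linarith :
            (-1:ℝ) < c - 1)).const_mul c).const_mul I)
          ((intervalIntegral.intervalIntegrable_rpow' (by linarith : (-1:ℝ) < c)).const_mul c),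
        intervalIntegral.integral_const_mul, intervalIntegral.integral_const_mul,
        intervalIntegral.integral_const_mul,
        integral_rpow (Or.inl (by linarith : (-1:ℝ) < c - 1)),
        integral_rpow (Or.inl (by linarith : (-1:ℝ) < c)),
        show c - 1 + 1 = c from by ring,
        Real.zero_rpow hc.ne', Real.zero_rpow hc1.ne', sub_zero, sub_zero]
      have hIc1 : I ^ (c + 1) = I ^ c * I := by
        rw [Real.rpow_add_one hIpos.ne' c]
      rw [hIc1]
      field_simp
      ring
    -- step 5 : combine
    rw [e1, e2]
    have hfinal : (∫⁻ t in Set.Ioi (0:ℝ), ν {x | t < G x} * ENNReal.ofReal (c * t ^ (c - 1)))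
        ≤ ENNReal.ofReal (I ^ (c + 1) / (c + 1)) := by
      have step1 : (∫⁻ t in Set.Ioi (0:ℝ), ν {x | t < G x} * ENNReal.ofReal (c * t ^ (c - 1)))
          ≤ ∫⁻ t in Set.Ioi (0:ℝ),
              ENNReal.ofReal (I - t) * ENNReal.ofReal (c * t ^ (c - 1)) := by
        apply lintegral_mono_ae
        rw [ae_restrict_iff' measurableSet_Ioi]
        exact ae_of_all _ fun t ht => mul_le_mul_left (hbound t ht) _
      refine step1.trans ?_
      rw [show Set.Ioi (0:ℝ) = Set.Ioc 0 I ∪ Set.Ioi I from (Set.Ioc_union_Ioi_eq_Ioi hI0).symm,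
        lintegral_union measurableSet_Ioi (Set.Ioc_disjoint_Ioi le_rfl)]
      have hz2 : (∫⁻ t in Set.Ioi I, ENNReal.ofReal (I - t) * ENNReal.ofReal (c * t ^ (c - 1)))
          = 0 := by
        rw [setLIntegral_congr_fun measurableSet_Ioi (fun t ht => ?_)
          (g := fun _ => 0), lintegral_zero]
        rw [ENNReal.ofReal_eq_zero.2 (by simp only [mem_Ioi] at ht; linarith), zero_mul]
      rw [hz2, add_zero]
      have hconv : (∫⁻ t in Set.Ioc (0:ℝ) I,
            ENNReal.ofReal (I - t) * ENNReal.ofReal (c * t ^ (c - 1)))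
          = ENNReal.ofReal (∫ t in Set.Ioc (0:ℝ) I, (I - t) * (c * t ^ (c - 1))) := by
        rw [ofReal_integral_eq_lintegral_ofReal hψint
          ((ae_restrict_iff' measurableSet_Ioc).2 (ae_of_all _ fun t ht =>
            mul_nonneg (by linarith [ht.2]) (mul_nonneg hc.le (Real.rpow_nonneg ht.1.le _))))]
        refine setLIntegral_congr_fun measurableSet_Ioc (fun t ht => ?_)
        rw [← ENNReal.ofReal_mul (by linarith [ht.2] : (0:ℝ) ≤ I - t)]
      rw [hconv, hval]
    exact ENNReal.toReal_le_of_le_ofReal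
      (div_nonneg (Real.rpow_nonneg hI0 _) hc1.le) hfinal

/-- Right-endpoint one-dimensional Opial-type inequality: for `α, β > 0` with
`α + β ≥ 1` and `f` absolutely continuous on `[a,b]` with `f b = 0`,
`∫ₐᵇ |f|^β |f'|^α ≤ (α/(α+β))^(α/(α+β)) ((b−a)^(α+β)/(α+β))^(β/(α+β)) ∫ₐᵇ |f'|^(α+β)`. -/
theorem opial_power_right (a b α β : ℝ) (hab : a < b)
    (hα : 0 < α) (hβ : 0 < β) (hαβ : 1 ≤ α + β)
    (f f' : ℝ → ℝ)
    (hf' : IntervalIntegrable f' MeasureTheory.volume a b)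
    (hf'p : IntervalIntegrable (fun x => |f' x| ^ (α + β)) MeasureTheory.volume a b)
    (hf : ∀ x ∈ Set.Icc a b, f x = ∫ t in b..x, f' t)
    (hfb : f b = 0) :
    ∫ x in a..b, |f x| ^ β * |f' x| ^ α ≤
      (α / (α + β)) ^ (α / (α + β)) *
        ((b - a) ^ (α + β) / (α + β)) ^ (β / (α + β)) *
        ∫ x in a..b, |f' x| ^ (α + β) := by

  have hab' : a ≤ b := hab.le
  set p : ℝ := α + β with hpdef
  have hp : 0 < p := by positivity
  have hβp : β < p := by simp [hpdef]; linarith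
  have hαp : α < p := by simp [hpdef]; linarith
  set μab := volume.restrict (Set.Ioc a b) with hμab
  haveI : IsFiniteMeasure μab :=
    ⟨by rw [hμab, Measure.restrict_apply_univ]; exact measure_Ioc_lt_top⟩
  have hIoc : IntegrableOn (fun x => |f' x| ^ p) (Set.Ioc a b) := hf'p.1
  -- measurable nonnegative surrogate for |f'|^p
  obtain ⟨h, hmeas, hnn, hmeq⟩ : ∃ h : ℝ → ℝ, Measurable h ∧ (∀ x, 0 ≤ h x) ∧
      (fun x => |f' x| ^ p) =ᵐ[μab] h := by
    have A : AEMeasurable (fun x => |f' x| ^ p) μab := hIoc.aemeasurable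
    refine ⟨fun x => max (A.mk _ x) 0, A.measurable_mk.max measurable_const,
      fun x => le_max_right _ _, ?_⟩
    filter_upwards [A.ae_eq_mk] with x hx
    rw [← hx, max_eq_left (Real.rpow_nonneg (abs_nonneg _) _)]
  have hinth : IntegrableOn h (Set.Ioc a b) := hIoc.congr hmeq
  set G : ℝ → ℝ := fun x => ∫ t in Set.Ioc x b, h t with hGdef
  set I : ℝ := ∫ t in Set.Ioc a b, h t with hIdef
  have hGnn : ∀ x, 0 ≤ G x := fun x =>
    setIntegral_nonneg measurableSet_Ioc fun t _ => hnn t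
  have hGcont : ContinuousOn G (Icc a b) := by
    have h1 : ContinuousOn (fun x => ∫ t in x..b, h t) (uIcc a b) :=
      continuousOn_primitive_interval_left
        (by rw [uIcc_of_le hab', integrableOn_Icc_iff_integrableOn_Ioc]; exact hinth)
    rw [uIcc_of_le hab'] at h1
    exact h1.congr fun x hx => (intervalIntegral.integral_of_le hx.2).symm
  have hGeq : ∀ x ∈ Icc a b, G x = ∫ t in Set.Ioc x b, |f' t| ^ p := by
    intro x hx
    exact (MeasureTheory.integral_congr_ae
      (ae_restrict_of_ae_restrict_of_subset (Set.Ioc_subset_Ioc_left hx.1) hmeq)).symm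
  have hGleI : ∀ x ∈ Icc a b, G x ≤ I := by
    intro x hx
    exact setIntegral_mono_set hinth (ae_of_all _ fun t => hnn t)
      (HasSubset.Subset.eventuallyLE (Set.Ioc_subset_Ioc_left hx.1))
  have hI0 : 0 ≤ I := setIntegral_nonneg measurableSet_Ioc fun t _ => hnn t
  have hIval : I = ∫ x in Set.Ioc a b, |f' x| ^ p := (MeasureTheory.integral_congr_ae hmeq).symm
  -- pointwise bound on |f|
  have hfbound : ∀ x ∈ Icc a b, |f x| ≤ (b - x) ^ ((p - 1) / p) * G x ^ (1 / p) := by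
    intro x hx
    have hxb : x ≤ b := hx.2
    have h1 : |f x| ≤ ∫ t in x..b, |f' t| := by
      rw [hf x hx, intervalIntegral.integral_symm, abs_neg]
      exact intervalIntegral.abs_integral_le_integral_abs hxb
    have h2 : (∫ t in x..b, |f' t|) = ∫ t in Set.Ioc x b, |f' t| :=
      intervalIntegral.integral_of_le hxb
    rcases eq_or_lt_of_le hαβ with hp1 | hp1
    · -- p = 1
      have hpe : p = 1 := hp1.symm
      have : (∫ t in Set.Ioc x b, |f' t|) = G x := by
        rw [hGeq x hx]
        exact MeasureTheory.integral_congr_ae (ae_of_all _ fun t => by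
          simp [hpe])
      rw [hpe]
      simpa [this, Real.rpow_one] using h1.trans_eq (h2.trans this)
    · -- 1 < p
      set μx := volume.restrict (Set.Ioc x b) with hμx
      haveI : IsFiniteMeasure μx :=
        ⟨by rw [hμx, Measure.restrict_apply_univ]; exact measure_Ioc_lt_top⟩
      have hconj : p.HolderConjugate (p / (p - 1)) :=
        Real.HolderConjugate.conjExponent hp1
      have hf'x : IntegrableOn f' (Set.Ioc x b) := hf'.1.mono_set (Set.Ioc_subset_Ioc_left hx.1)
      have habs : AEStronglyMeasurable (fun t => |f' t|) μx :=
        hf'x.abs.aestronglyMeasurable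
      have hMem1 : MemLp (fun t => |f' t|) (ENNReal.ofReal p) μx := by
        refine memLp_of_int hp habs ?_
        have : IntegrableOn (fun t => |f' t| ^ p) (Set.Ioc x b) :=
          hIoc.mono_set (Set.Ioc_subset_Ioc_left hx.1)
        exact this.congr (ae_of_all _ fun t => by simp [abs_abs])
      have hMem2 : MemLp (fun _ : ℝ => (1:ℝ)) (ENNReal.ofReal (p / (p - 1))) μx :=
        memLp_const 1
      have hH := integral_mul_le_Lp_mul_Lq_of_nonneg hconj
        (ae_of_all _ fun t => abs_nonneg (f' t)) (ae_of_all _ fun _ => zero_le_one)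
        hMem1 hMem2
      simp only [mul_one, Real.one_rpow] at hH
      have hvol : ∫ (_ : ℝ), (1:ℝ) ∂μx = b - x := by
        rw [hμx, MeasureTheory.integral_const, measureReal_restrict_apply_univ, Real.volume_real_Ioc, smul_eq_mul,
          mul_one, max_eq_left (by linarith)]
      rw [hvol] at hH
      have hGx : (∫ t, |f' t| ^ p ∂μx) = G x := by
        rw [hGeq x hx]
      rw [hGx] at hH
      have hq : 1 / (p / (p - 1)) = (p - 1) / p := one_div_div _ _
      rw [hq] at hH
      calc |f x| ≤ ∫ t in Set.Ioc x b, |f' t| := h1.trans_eq h2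
        _ ≤ G x ^ (1 / p) * (b - x) ^ ((p - 1) / p) := hH
        _ = (b - x) ^ ((p - 1) / p) * G x ^ (1 / p) := mul_comm _ _
  -- step B setup
  set u : ℝ → ℝ := fun x => (b - x) ^ ((p - 1) / p * β) with hudef
  set v : ℝ → ℝ := fun x => G x ^ (β / p) * |f' x| ^ α with hvdef
  have hue : 0 ≤ (p - 1) / p * β := mul_nonneg (div_nonneg (by linarith) hp.le) hβ.le
  have hucont : Continuous u :=
    (Real.continuous_rpow_const hue).comp (continuous_const.sub continuous_id)
  have hvnn : ∀ x, 0 ≤ v x := fun x =>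
    mul_nonneg (Real.rpow_nonneg (hGnn x) _) (Real.rpow_nonneg (abs_nonneg _) _)
  have hptB : ∀ x ∈ Icc a b, |f x| ^ β * |f' x| ^ α ≤ u x * v x := by
    intro x hx
    have hbx : (0:ℝ) ≤ b - x := by linarith [hx.2]
    have h1 : |f x| ^ β ≤ ((b - x) ^ ((p - 1) / p) * G x ^ (1 / p)) ^ β :=
      Real.rpow_le_rpow (abs_nonneg _) (hfbound x hx) hβ.le
    have h2 : ((b - x) ^ ((p - 1) / p) * G x ^ (1 / p)) ^ β = u x * G x ^ (β / p) := by
      rw [Real.mul_rpow (Real.rpow_nonneg hbx _) (Real.rpow_nonneg (hGnn x) _),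
        ← Real.rpow_mul hbx, ← Real.rpow_mul (hGnn x), show 1 / p * β = β / p from by ring]
    calc |f x| ^ β * |f' x| ^ α ≤ (u x * G x ^ (β / p)) * |f' x| ^ α :=
          mul_le_mul_of_nonneg_right (h1.trans_eq h2) (Real.rpow_nonneg (abs_nonneg _) _)
      _ = u x * v x := mul_assoc _ _ _
  -- integrabilities
  have hfcont : ContinuousOn f (Icc a b) := by
    have hic : ContinuousOn (fun y => ∫ t in b..y, f' t) (uIcc a b) :=
      continuousOn_primitive_interval' hf' right_mem_uIcc
    rw [uIcc_of_le hab'] at hic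
    exact hic.congr fun x hx => hf x hx
  have habsα : AEStronglyMeasurable (fun x => |f' x| ^ α) μab :=
    ((Real.continuous_rpow_const hα.le).comp continuous_abs).comp_aestronglyMeasurable
      hf'.1.aestronglyMeasurable
  have hαint : IntegrableOn (fun x => |f' x| ^ α) (Set.Ioc a b) := by
    apply Integrable.mono' ((integrable_const (1:ℝ)).add hIoc) habsα
    apply ae_of_all
    intro x
    rw [Real.norm_of_nonneg (Real.rpow_nonneg (abs_nonneg _) _)]
    simp only [Pi.add_apply]
    rcases le_total |f' x| 1 with hc | hc
    · have h4 := Real.rpow_le_one (abs_nonneg _) hc hα.le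
      have h5 : (0:ℝ) ≤ |f' x| ^ p := Real.rpow_nonneg (abs_nonneg _) _
      linarith
    · have h4 := Real.rpow_le_rpow_of_exponent_le hc hαp.le
      linarith
  have hmono_r : μab ≤ volume.restrict (Icc a b) :=
    Measure.restrict_mono Set.Ioc_subset_Icc_self le_rfl
  have hLint : IntegrableOn (fun x => |f x| ^ β * |f' x| ^ α) (Set.Ioc a b) := by
    have hfβcont : ContinuousOn (fun x => |f x| ^ β) (Icc a b) :=
      ((Real.continuous_rpow_const hβ.le).comp continuous_abs).comp_continuousOn hfcont
    obtain ⟨C, hC⟩ := isCompact_Icc.exists_bound_of_continuousOn hfβcont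
    apply Integrable.bdd_mul (c := C) hαint
      ((hfβcont.aestronglyMeasurable measurableSet_Icc).mono_measure hmono_r)
    filter_upwards [ae_restrict_mem measurableSet_Ioc] with x hx
    exact hC x (Set.Ioc_subset_Icc_self hx)
  have hGβp_cont : ContinuousOn (fun x => G x ^ (β / p)) (Icc a b) :=
    (Real.continuous_rpow_const (div_nonneg hβ.le hp.le)).comp_continuousOn hGcont
  have huvint : IntegrableOn (fun x => u x * v x) (Set.Ioc a b) := by
    have hwcont : ContinuousOn (fun x => u x * G x ^ (β / p)) (Icc a b) :=
      hucont.continuousOn.mul hGβp_cont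
    obtain ⟨C, hC⟩ := isCompact_Icc.exists_bound_of_continuousOn hwcont
    have h6 : IntegrableOn (fun x => (u x * G x ^ (β / p)) * |f' x| ^ α) (Set.Ioc a b) := by
      apply Integrable.bdd_mul (c := C) hαint
        ((hwcont.aestronglyMeasurable measurableSet_Icc).mono_measure hmono_r)
      filter_upwards [ae_restrict_mem measurableSet_Ioc] with x hx
      exact hC x (Set.Ioc_subset_Icc_self hx)
    exact h6.congr (ae_of_all _ fun x => mul_assoc _ _ _)
  -- Hölder
  have hconj2 : (p / β).HolderConjugate (p / α) := by
    rw [Real.holderConjugate_iff]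
    constructor
    · exact (one_lt_div hβ).2 hβp
    · rw [inv_div, inv_div, ← add_div, add_comm β α, ← hpdef, div_self hp.ne']
  have hMu : MemLp u (ENNReal.ofReal (p / β)) μab := by
    refine memLp_of_int (div_pos hp hβ) hucont.aestronglyMeasurable ?_
    have : Continuous (fun x => |u x| ^ (p / β)) :=
      (Real.continuous_rpow_const (div_pos hp hβ).le).comp (continuous_abs.comp hucont)
    exact (this.integrableOn_Ioc : IntegrableOn _ (Set.Ioc a b))
  have hvpow : ∀ x, |v x| ^ (p / α) = G x ^ (β / α) * |f' x| ^ p := by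
    intro x
    rw [abs_of_nonneg (hvnn x),
      Real.mul_rpow (Real.rpow_nonneg (hGnn x) _) (Real.rpow_nonneg (abs_nonneg _) _),
      ← Real.rpow_mul (hGnn x), ← Real.rpow_mul (abs_nonneg _),
      show β / p * (p / α) = β / α from by field_simp,
      show α * (p / α) = p from by field_simp]
  have hvmeas : AEStronglyMeasurable v μab :=
    ((hGβp_cont.aestronglyMeasurable measurableSet_Icc).mono_measure hmono_r).mul habsα
  have hMv : MemLp v (ENNReal.ofReal (p / α)) μab := by
    refine memLp_of_int (div_pos hp hα) hvmeas ?_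
    have h7 : IntegrableOn (fun x => G x ^ (β / α) * |f' x| ^ p) (Set.Ioc a b) := by
      apply Integrable.bdd_mul (c := I ^ (β / α)) hIoc
        (((((Real.continuous_rpow_const (div_nonneg hβ.le hα.le)).comp_continuousOn
          hGcont)).aestronglyMeasurable measurableSet_Icc).mono_measure hmono_r)
      filter_upwards [ae_restrict_mem measurableSet_Ioc] with x hx
      simpa [Real.norm_of_nonneg (Real.rpow_nonneg (hGnn x) (β / α))] using
        Real.rpow_le_rpow (hGnn x) (hGleI x (Set.Ioc_subset_Icc_self hx))
          (div_nonneg hβ.le hα.le)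
    exact h7.congr (ae_of_all _ fun x => (hvpow x).symm)
  have hHold := integral_mul_le_Lp_mul_Lq_of_nonneg hconj2
    ((ae_restrict_iff' measurableSet_Ioc).2 (ae_of_all _ fun x hx =>
      Real.rpow_nonneg (by linarith [hx.2] : (0:ℝ) ≤ b - x) _))
    (ae_of_all _ fun x => hvnn x) hMu hMv
  -- evaluate the two factors
  have E1 : ∫ x in Set.Ioc a b, u x ^ (p / β) = (b - a) ^ p / p := by
    rw [setIntegral_congr_fun measurableSet_Ioc (g := fun x => (b - x) ^ (p - 1))
      (fun x hx => by
        rw [← Real.rpow_mul (by linarith [hx.2] : (0:ℝ) ≤ b - x),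
          show (p - 1) / p * β * (p / β) = p - 1 from by field_simp]),
      ← intervalIntegral.integral_of_le hab',
      intervalIntegral.integral_comp_sub_left (fun t => t ^ (p - 1)) b, sub_self,
      integral_rpow (Or.inl (by linarith : (-1:ℝ) < p - 1)),
      show p - 1 + 1 = p from by ring, Real.zero_rpow hp.ne', sub_zero]
  have E2 : ∫ x in Set.Ioc a b, v x ^ (p / α) ≤ α / p * I ^ (p / α) := by
    have h8 : ∫ x in Set.Ioc a b, v x ^ (p / α) = ∫ x in Set.Ioc a b, G x ^ (β / α) * h x := by
      apply MeasureTheory.integral_congr_ae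
      filter_upwards [hmeq] with x hx
      rw [← abs_of_nonneg (hvnn x), hvpow x, hx]
    have h9 := opial_key hab' (div_pos hβ hα) hmeas hnn hinth
    rw [show β / α + 1 = p / α from by rw [hpdef]; field_simp; try ring] at h9
    rw [h8]
    refine h9.trans_eq ?_
    rw [div_eq_mul_inv, inv_div, mul_comm]
  -- combine everything
  rw [intervalIntegral.integral_of_le hab', intervalIntegral.integral_of_le hab', ← hIval]
  have h10 : (1:ℝ) / (p / β) = β / p := by rw [one_div, inv_div]
  have h11 : (1:ℝ) / (p / α) = α / p := by rw [one_div, inv_div]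
  calc ∫ x in Set.Ioc a b, |f x| ^ β * |f' x| ^ α
      ≤ ∫ x in Set.Ioc a b, u x * v x :=
        setIntegral_mono_on hLint huvint measurableSet_Ioc
          (fun x hx => hptB x (Set.Ioc_subset_Icc_self hx))
    _ ≤ (∫ x in Set.Ioc a b, u x ^ (p / β)) ^ ((1:ℝ) / (p / β)) *
        (∫ x in Set.Ioc a b, v x ^ (p / α)) ^ ((1:ℝ) / (p / α)) := hHold
    _ ≤ ((b - a) ^ p / p) ^ (β / p) * (α / p * I ^ (p / α)) ^ (α / p) := by
        rw [E1, h10, h11]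
        refine mul_le_mul_of_nonneg_left ?_
          (Real.rpow_nonneg (div_nonneg (Real.rpow_nonneg (by linarith) _) hp.le) _)
        exact Real.rpow_le_rpow
          (MeasureTheory.integral_nonneg fun x => Real.rpow_nonneg (hvnn x) _)
          E2 (div_nonneg hα.le hp.le)
    _ = (α / p) ^ (α / p) * ((b - a) ^ p / p) ^ (β / p) * I := by
        rw [Real.mul_rpow (div_nonneg hα.le hp.le) (Real.rpow_nonneg hI0 _),
          ← Real.rpow_mul hI0, show p / α * (α / p) = 1 from by field_simp,
          Real.rpow_one]
        ring
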